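/- Let A be a commutative domain containing ℚ and D a locally nilpotent derivation on A. For nonzero a, b ∈ A, deg_D(ab) = deg_D(a) + deg_D(b), where deg_D(x) is the largest n with D^n(x) ≠ 0. -/
import Mathlib

open Finset

private lemma iterate_D_mul {A : Type*} [CommRing A] [Algebra ℚ A]
    (D : Derivation ℚ A A) (n : ℕ) (p q : A) :
    (⇑D)^[n] (p * q) =
      ∑ k ∈ range n.succ, (n.choose k • ((⇑D)^[n - k] p * (⇑D)^[k] q)) := by
  induction n with
  | zero => simp [Finset.range]
  | succ n IH =>
    calc
      (⇑D)^[n + 1] (p * q) =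
          D (∑ k ∈ range n.succ,
              n.choose k • ((⇑D)^[n - k] p * (⇑D)^[k] q)) := by
        rw [Function.iterate_succ_apply', IH]
      _ = (∑ k ∈ range n.succ,
            n.choose k • ((⇑D)^[n - k + 1] p * (⇑D)^[k] q)) +
          ∑ k ∈ range n.succ,
            n.choose k • ((⇑D)^[n - k] p * (⇑D)^[k + 1] q) := by
        rw [map_sum]
        simp_rw [map_nsmul, Derivation.leibniz, smul_eq_mul,
          Function.iterate_succ_apply', smul_add, ← sum_add_distrib]
        refine sum_congr rfl fun k _ => ?_
        ring_nf
      _ = (∑ k ∈ range n.succ,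
                n.choose k.succ • ((⇑D)^[n - k] p * (⇑D)^[k + 1] q)) +
              1 • ((⇑D)^[n + 1] p * (⇑D)^[0] q) +
            ∑ k ∈ range n.succ, n.choose k • ((⇑D)^[n - k] p * (⇑D)^[k + 1] q) :=
        ?_
      _ = ((∑ k ∈ range n.succ, n.choose k • ((⇑D)^[n - k] p * (⇑D)^[k + 1] q)) +
              ∑ k ∈ range n.succ,
                n.choose k.succ • ((⇑D)^[n - k] p * (⇑D)^[k + 1] q)) +
            1 • ((⇑D)^[n + 1] p * (⇑D)^[0] q) := by
        rw [add_comm, add_assoc]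
      _ = (∑ i ∈ range n.succ,
              (n + 1).choose (i + 1) • ((⇑D)^[n + 1 - (i + 1)] p * (⇑D)^[i + 1] q)) +
            1 • ((⇑D)^[n + 1] p * (⇑D)^[0] q) := by
        simp_rw [Nat.choose_succ_succ, Nat.succ_sub_succ, add_smul, sum_add_distrib]
      _ = ∑ k ∈ range n.succ.succ,
            n.succ.choose k • ((⇑D)^[n.succ - k] p * (⇑D)^[k] q) := by
        rw [sum_range_succ' _ n.succ, Nat.choose_zero_right, tsub_zero]
    congr
    refine (sum_range_succ' _ _).trans (congr_arg₂ (· + ·) ?_ ?_)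
    · rw [sum_range_succ, Nat.choose_succ_self, zero_smul, add_zero]
      refine sum_congr rfl fun k hk => ?_
      rw [mem_range] at hk
      congr
      omega
    · rw [Nat.choose_zero_right, tsub_zero]

private lemma iterate_D_zero_of_le {A : Type*} [CommRing A] [Algebra ℚ A]
    (D : Derivation ℚ A A) {x : A} {k : ℕ} (h : (⇑D)^[k] x = 0)
    {l : ℕ} (hkl : k ≤ l) : (⇑D)^[l] x = 0 := by
  obtain ⟨j, rfl⟩ := Nat.exists_eq_add_of_le hkl
  rw [add_comm, Function.iterate_add_apply, h]
  clear hkl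
  induction j with
  | zero => rfl
  | succ j IH => rw [Function.iterate_succ_apply', IH, map_zero]

/-- For a locally nilpotent derivation `D` on a domain containing `ℚ`,
`deg_D (a*b) = deg_D a + deg_D b` for nonzero `a, b`. -/
theorem stmt_1 {A : Type*} [CommRing A] [IsDomain A] [Algebra ℚ A]
    (D : Derivation ℚ A A) (hln : ∀ x : A, ∃ n : ℕ, (⇑D)^[n] x = 0)
    (a b : A) (ha : a ≠ 0) (hb : b ≠ 0) (m n : ℕ)
    (hma : (⇑D)^[m] a ≠ 0) (hma' : (⇑D)^[m + 1] a = 0)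
    (hnb : (⇑D)^[n] b ≠ 0) (hnb' : (⇑D)^[n + 1] b = 0) :
    (⇑D)^[m + n] (a * b) ≠ 0 ∧ (⇑D)^[m + n + 1] (a * b) = 0 := by
  haveI : CharZero A := charZero_of_injective_algebraMap (algebraMap ℚ A).injective
  constructor
  · rw [iterate_D_mul]
    have key : ∑ k ∈ range (m + n).succ,
        (m + n).choose k • ((⇑D)^[m + n - k] a * (⇑D)^[k] b)
        = (m + n).choose n • ((⇑D)^[m] a * (⇑D)^[n] b) := by
      rw [Finset.sum_eq_single n]
      · rw [Nat.add_sub_cancel]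
      · intro k hk hkn
        rw [mem_range] at hk
        rcases lt_or_gt_of_ne hkn with h | h
        · rw [iterate_D_zero_of_le D hma' (by omega), zero_mul, smul_zero]
        · rw [iterate_D_zero_of_le D hnb' (by omega), mul_zero, smul_zero]
      · intro h
        exact absurd (mem_range.mpr (by omega)) h
    rw [key, nsmul_eq_mul]
    exact mul_ne_zero (Nat.cast_ne_zero.mpr (Nat.choose_pos (by omega)).ne')
      (mul_ne_zero hma hnb)
  · rw [iterate_D_mul]
    refine Finset.sum_eq_zero fun k hk => ?_
    rcases le_or_gt k n with h | h
    · rw [iterate_D_zero_of_le D hma' (by omega), zero_mul, smul_zero]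
    · rw [iterate_D_zero_of_le D hnb' (by omega), mul_zero, smul_zero]
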